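/- Let f₁(z) = ∑_{n=1}^∞ z^{2ⁿ} (the lacunary series, convergent on the open unit disk) and let θ = 2π·p/2^s for some natural numbers p and s. Then the radial segment at angle θ has infinite length in the harmonic metric e^{2·Re(f₁)}g₀ on the unit disk: the function r ↦ exp(Re(∑_{n=1}^∞ (r·e^{iθ})^{2ⁿ})) is NOT integrable on the interval (0, 1). -/

import Mathlib

open MeasureTheory

lemma phase_one (p s : ℕ) (θ : ℝ) (hθ : θ = 2 * Real.pi * p / 2 ^ s)
    (n : ℕ) (hn : s ≤ n + 1) :
    Complex.exp (θ * Complex.I) ^ (2 ^ (n + 1)) = 1 := by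
  rw [← Complex.exp_nat_mul]
  have key : ((2 ^ (n+1) : ℕ) : ℂ) * (θ * Complex.I)
      = ((p * 2 ^ (n+1-s) : ℕ) : ℤ) * (2 * Real.pi * Complex.I) := by
    have h2 : (2:ℝ) ^ s * 2 ^ (n+1-s) = 2 ^ (n+1) := by
      rw [← pow_add]; congr 1; omega
    have hr : (2:ℝ) ^ (n+1) * θ = (p * 2 ^ (n+1-s) : ℕ) * (2 * Real.pi) := by
      rw [hθ]
      have h2s : (2:ℝ) ^ s ≠ 0 := by positivity
      field_simp
      rw [← h2]; push_cast; ring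
    push_cast
    rw [show ((2:ℂ)^(n+1)) * (↑θ * Complex.I) = (((2:ℝ)^(n+1) * θ : ℝ) : ℂ) * Complex.I by
      push_cast; ring]
    rw [hr]
    push_cast; ring
  rw [key, Complex.exp_int_mul_two_pi_mul_I]


lemma re_tsum_split (g : ℕ → ℂ) (hsum : Summable g) (s : ℕ) :
    (∑' n, g n).re = ∑ n ∈ Finset.range s, (g n).re + ∑' i, (g (i + s)).re := by
  have hsumre : Summable fun n => (g n).re := hsum.map Complex.reCLM Complex.continuous_re
  rw [Complex.re_tsum hsum,
    ← Summable.sum_add_tsum_nat_add' (f := fun n => (g n).re) (k := s) ((summable_nat_add_iff s).mpr hsumre)]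

lemma keybound (p s : ℕ) (θ : ℝ) (hθ : θ = 2 * Real.pi * p / 2 ^ s)
    (k : ℕ) (r : ℝ) (hr1 : 1 - (1/2:ℝ) ^ (k+s+2) ≤ r) (hr2 : r < 1) :
    (-(s:ℝ)) + 3/4 * k ≤
      (∑' n : ℕ, ((r : ℂ) * Complex.exp (θ * Complex.I)) ^ (2 ^ (n + 1))).re := by
  have hr0 : (0:ℝ) ≤ r := by
    have : (1/2:ℝ) ^ (k+s+2) ≤ (1/2:ℝ) ^ 0 := by
      apply pow_le_pow_of_le_one (by norm_num) (by norm_num) (by omega)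
    nlinarith [hr1]
  set ω := Complex.exp (θ * Complex.I) with hω
  have hωnorm : ‖ω‖ = 1 := by
    rw [hω]
    simp [Complex.norm_exp_ofReal_mul_I θ]
  set g : ℕ → ℂ := fun n => ((r : ℂ) * ω) ^ (2 ^ (n + 1)) with hg
  have hnorm : ∀ n, ‖g n‖ = r ^ (2 ^ (n+1)) := by
    intro n
    rw [hg]
    simp [norm_pow, norm_mul, hωnorm, abs_of_nonneg hr0]
  have hsum : Summable g := by
    apply Summable.of_norm
    apply Summable.of_nonneg_of_le (fun n => norm_nonneg _) (fun n => ?_)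
      (((summable_geometric_of_lt_one hr0 hr2)).mul_left r)
    rw [hnorm n]
    calc r ^ (2 ^ (n+1)) ≤ r ^ (n+1) := by
          apply pow_le_pow_of_le_one hr0 hr2.le
          exact (Nat.lt_two_pow_self (n := n+1)).le
      _ = r * r ^ n := by ring
  have hsumre : Summable (fun n => (g n).re) := by
    exact hsum.map Complex.reCLM Complex.continuous_re
  rw [re_tsum_split g hsum s]
  -- head bound
  have hterm_norm_le : ∀ n, ‖g n‖ ≤ 1 := by
    intro n
    rw [hnorm n]
    exact pow_le_one₀ hr0 hr2.le
  have hhead : (-(s:ℝ)) ≤ ∑ n ∈ Finset.range s, (g n).re := by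
    have : ∀ n ∈ Finset.range s, (-1:ℝ) ≤ (g n).re := by
      intro n _
      have h1 := Complex.abs_re_le_norm (g n)
      have h2 := hterm_norm_le n
      have := abs_le.mp (h1.trans h2)
      linarith [this.1]
    calc (-(s:ℝ)) = ∑ n ∈ Finset.range s, (-1:ℝ) := by simp
      _ ≤ _ := Finset.sum_le_sum this
  -- tail terms are real
  have htail_eq : ∀ i, (g (i + s)).re = r ^ (2 ^ (i+s+1)) := by
    intro i
    rw [hg]
    simp only
    rw [mul_pow, phase_one p s θ hθ (i+s) (by omega), mul_one]
    rw [← Complex.ofReal_pow, Complex.ofReal_re]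
  have htail : 3/4 * (k:ℝ) ≤ ∑' i, (g (i + s)).re := by
    have hsumtail : Summable (fun i => (g (i + s)).re) :=
      (summable_nat_add_iff (f := fun n => (g n).re) s).mpr hsumre
    have hstep : ∀ i ∈ Finset.range k, (3/4 : ℝ) ≤ (g (i + s)).re := by
      intro i hi
      rw [htail_eq i]
      have hik : i + s + 1 ≤ k + s := by
        simp only [Finset.mem_range] at hi; omega
      have h1 : r ^ (2 ^ (k+s)) ≤ r ^ (2 ^ (i+s+1)) := by
        apply pow_le_pow_of_le_one hr0 hr2.le
        exact Nat.pow_le_pow_right (by norm_num) hik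
      have h2 : (1 - (1/2:ℝ) ^ (k+s+2)) ^ (2 ^ (k+s)) ≤ r ^ (2 ^ (k+s)) := by
        apply pow_le_pow_left₀ _ hr1
        have : (1/2:ℝ) ^ (k+s+2) ≤ (1/2:ℝ) ^ 0 := by
          apply pow_le_pow_of_le_one (by norm_num) (by norm_num) (by omega)
        nlinarith
      have h3 : (3/4:ℝ) ≤ (1 - (1/2:ℝ) ^ (k+s+2)) ^ (2 ^ (k+s)) := by
        have hb := one_add_mul_le_pow (a := -(1/2:ℝ)^(k+s+2)) (by
          have h01 : (1/2:ℝ)^(k+s+2) ≤ 1 := pow_le_one₀ (by norm_num) (by norm_num)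
          linarith) (2 ^ (k+s))
        have hc : ((2:ℝ)^(k+s) : ℝ) * (1/2:ℝ)^(k+s+2) = 1/4 := by
          have he : (1/2:ℝ)^(k+s+2) = ((1/2:ℝ)^(k+s)) * (1/4) := by
            rw [pow_add]; norm_num
          rw [he, ← mul_assoc, ← mul_pow]
          norm_num
        push_cast at hb
        rw [show (1 + -(1/2:ℝ)^(k+s+2)) = 1 - (1/2:ℝ)^(k+s+2) by ring] at hb
        nlinarith
      linarith
    calc (3/4 : ℝ) * k = ∑ i ∈ Finset.range k, (3/4:ℝ) := by
          simp; ring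
      _ ≤ ∑ i ∈ Finset.range k, (g (i+s)).re := Finset.sum_le_sum hstep
      _ ≤ ∑' i, (g (i+s)).re := by
          apply Summable.sum_le_tsum _ (fun i _ => ?_) hsumtail
          rw [htail_eq i]
          positivity
  linarith

/-- For `f₁(z) = ∑_{n=1}^∞ z^{2ⁿ}` and `θ = 2π·p/2^s` a dyadic angle, the radial segment
at angle `θ` has infinite length in the harmonic metric `e^{2 Re f₁}g₀`: the integrand
`r ↦ exp(Re(f₁(r·e^{iθ})))` is not integrable on `(0,1)`. -/
theorem lacunary_radial_length_infinite_re (p s : ℕ) (θ : ℝ)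
    (hθ : θ = 2 * Real.pi * p / 2 ^ s) :
    ¬ IntegrableOn (fun r : ℝ =>
        Real.exp ((∑' n : ℕ, ((r : ℂ) * Complex.exp (θ * Complex.I)) ^ (2 ^ (n + 1))).re))
      (Set.Ioo (0:ℝ) 1) := by
  intro h
  set f : ℝ → ℝ := fun r : ℝ =>
    Real.exp ((∑' n : ℕ, ((r : ℂ) * Complex.exp (θ * Complex.I)) ^ (2 ^ (n + 1))).re) with hf
  have hfpos : ∀ r, 0 < f r := fun r => Real.exp_pos _
  have key : ∀ k : ℕ,
      Real.exp (-(s:ℝ) + 3/4 * k) * (1/2:ℝ)^(k+s+2) ≤ ∫ r in Set.Ioo (0:ℝ) 1, f r := by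
    intro k
    set a : ℝ := 1 - (1/2:ℝ)^(k+s+2) with ha
    have hpow1 : (1/2:ℝ)^(k+s+2) ≤ 1 := pow_le_one₀ (by norm_num) (by norm_num)
    have hpow0 : (0:ℝ) < (1/2:ℝ)^(k+s+2) := by positivity
    have ha0 : 0 ≤ a := by rw [ha]; linarith
    have ha1 : a < 1 := by rw [ha]; linarith
    have hsub : Set.Ioo a 1 ⊆ Set.Ioo (0:ℝ) 1 :=
      fun x hx => ⟨lt_of_le_of_lt ha0 hx.1, hx.2⟩
    have hint : IntegrableOn f (Set.Ioo a 1) := h.mono_set hsub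
    have hb : ∀ x ∈ Set.Ioo a 1, Real.exp (-(s:ℝ) + 3/4 * k) ≤ f x := by
      intro x hx
      apply Real.exp_le_exp.mpr
      exact keybound p s θ hθ k x hx.1.le hx.2
    have hlow := MeasureTheory.setIntegral_ge_of_const_le measurableSet_Ioo
      (by rw [Real.volume_Ioo]; exact ENNReal.ofReal_ne_top) hb hint
    have hvol : volume.real (Set.Ioo a 1) = (1/2:ℝ)^(k+s+2) := by
      rw [Measure.real, Real.volume_Ioo, ENNReal.toReal_ofReal (by linarith)]
      rw [ha]; ring
    rw [hvol, smul_eq_mul, mul_comm] at hlow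
    refine hlow.trans ?_
    exact MeasureTheory.setIntegral_mono_set h
      (Filter.Eventually.of_forall fun x => (hfpos x).le)
      (HasSubset.Subset.eventuallyLE hsub)
  set I := ∫ r in Set.Ioo (0:ℝ) 1, f r with hI
  have hc : (0:ℝ) < 3/4 - Real.log 2 := by
    have := Real.log_two_lt_d9; norm_num at this ⊢; linarith
  have hexp : ∀ k : ℕ, Real.exp (-(s:ℝ) + 3/4*k) * (1/2:ℝ)^(k+s+2)
      = Real.exp ((-(s:ℝ) - ((s:ℝ)+2)*Real.log 2) + (3/4 - Real.log 2)*k) := by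
    intro k
    have h12 : (1/2:ℝ)^(k+s+2) = Real.exp ((((k+s+2):ℕ):ℝ) * Real.log (1/2)) := by
      rw [Real.exp_nat_mul, Real.exp_log (by norm_num : (0:ℝ) < 1/2)]
    rw [h12, ← Real.exp_add]
    congr 1
    rw [one_div, Real.log_inv]
    push_cast
    ring
  have htend : Filter.Tendsto
      (fun k : ℕ => Real.exp ((-(s:ℝ) - ((s:ℝ)+2)*Real.log 2) + (3/4 - Real.log 2)*k))
      Filter.atTop Filter.atTop := by
    apply Real.tendsto_exp_atTop.comp
    apply Filter.tendsto_atTop_add_const_left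
    exact Filter.Tendsto.const_mul_atTop hc tendsto_natCast_atTop_atTop
  obtain ⟨k, hk⟩ := (htend.eventually_ge_atTop (I + 1)).exists
  have := key k
  rw [hexp k] at this

  linarith
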